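/- Let n ≥ 2 and let p_1, …, p_n be integers with 2 ≤ p_1 ≤ ⋯ ≤ p_n, set q = p_1⋯p_n − (p_1+⋯+p_n) + n, and let p_{n+1} be an integer with q ≤ p_{n+1} ≤ p_1⋯p_n. Let φ : (ℝ^{p_1} × ⋯ × ℝ^{p_{n+1}})^{p_{n+1}} → (space of format p_1 × ⋯ × p_{n+1} tensors) be the map φ(a^{(1)}_1,…,a^{(1)}_{n+1},…,a^{(p_{n+1})}_1,…,a^{(p_{n+1})}_{n+1}) = Σ_{h=1}^{p_{n+1}} a^{(h)}_1 ⊗ ⋯ ⊗ a^{(h)}_{n+1}. Then there exists a point z in the domain at which the Fréchet derivative of φ is a surjective linear map onto the space of format p_1 × ⋯ × p_{n+1} tensors. -/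

import Mathlib

noncomputable section

/-- The rank-one tensor `a₁ ⊗ ⋯ ⊗ aₙ`. -/
def rankOneTensor {n : ℕ} (p : Fin n → ℕ) (a : ∀ i, Fin (p i) → ℝ) :
    (∀ i, Fin (p i)) → ℝ :=
  fun k => ∏ i, a i (k i)

namespace TensorPf

open Matrix Finset

/-- Surjectivity of `mulVec` is equivalent to nonvanishing of the Gram determinant. -/
lemma gram_det_ne_zero_iff {α β : Type*} [Fintype α] [Fintype β] [DecidableEq α]
    (A : Matrix α β ℝ) :
    (A * Aᵀ).det ≠ 0 ↔ ∀ u : α → ℝ, ∃ w : β → ℝ, A.mulVec w = u := by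
  constructor
  · intro hdet u
    refine ⟨Aᵀ.mulVec ((A * Aᵀ)⁻¹.mulVec u), ?_⟩
    rw [Matrix.mulVec_mulVec, Matrix.mulVec_mulVec,
      Matrix.mul_nonsing_inv _ (isUnit_iff_ne_zero.mpr hdet), Matrix.one_mulVec]
  · intro hsurj
    by_contra hdet
    obtain ⟨y, hy0, hyz⟩ := (Matrix.exists_mulVec_eq_zero_iff).mpr hdet
    have hAty : Aᵀ.mulVec y = 0 := by
      have h2 : y ⬝ᵥ ((A * Aᵀ) *ᵥ y) = 0 := by rw [hyz]; simp
      rw [← Matrix.mulVec_mulVec, Matrix.dotProduct_mulVec, ← Matrix.mulVec_transpose] at h2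
      exact dotProduct_self_eq_zero.mp h2
    obtain ⟨w, hw⟩ := hsurj y
    apply hy0
    have h3 : y ⬝ᵥ y = 0 := by
      have h4 : y ⬝ᵥ (A *ᵥ w) = 0 := by
        rw [Matrix.dotProduct_mulVec, ← Matrix.mulVec_transpose, hAty]
        simp
      rwa [hw] at h4
    exact dotProduct_self_eq_zero.mp h3

lemma prod_update_eval {m : ℕ} (q : Fin m → ℕ) (c : ∀ i : Fin m, Fin (q i) → ℝ) (i₀ : Fin m)
    (w : Fin (q i₀) → ℝ) (k : ∀ i, Fin (q i)) :
    (∏ j, (Function.update c i₀ w) j (k j))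
      = ∑ l : Fin (q i₀),
          (∏ j, if j = i₀ then (if k i₀ = l then (1 : ℝ) else 0) else c j (k j)) * w l := by
  have hL : (∏ j, (Function.update c i₀ w) j (k j))
      = w (k i₀) * ∏ j ∈ univ.erase i₀, c j (k j) := by
    rw [← Finset.mul_prod_erase univ _ (Finset.mem_univ i₀)]
    congr 1
    · simp
    · exact Finset.prod_congr rfl fun j hj => by
        rw [Function.update_of_ne (Finset.ne_of_mem_erase hj)]
  have hR : ∀ l : Fin (q i₀),
      (∏ j, if j = i₀ then (if k i₀ = l then (1 : ℝ) else 0) else c j (k j))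
        = (if k i₀ = l then (1 : ℝ) else 0) * ∏ j ∈ univ.erase i₀, c j (k j) := by
    intro l
    rw [← Finset.mul_prod_erase univ _ (Finset.mem_univ i₀)]
    congr 1
    · simp
    · exact Finset.prod_congr rfl fun j hj => by rw [if_neg (Finset.ne_of_mem_erase hj)]
  simp only [hL, hR, ite_mul, one_mul, zero_mul]
  rw [Finset.sum_ite_eq univ (k i₀) (fun l => (∏ j ∈ univ.erase i₀, c j (k j)) * w l)]
  simp [mul_comm]

variable {n : ℕ} (p : Fin (n + 1) → ℕ)

/-- The matrix whose columns are the first-`n`-factor tangent vectors at summand `h`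
together with all the rank-one points of the configuration `c`. -/
def Amat (c : Fin (p (Fin.last n)) → ∀ i : Fin n, Fin (p i.castSucc) → ℝ)
    (h : Fin (p (Fin.last n))) :
    Matrix (∀ i : Fin n, Fin (p i.castSucc))
      ((Σ i : Fin n, Fin (p i.castSucc)) ⊕ Fin (p (Fin.last n))) ℝ :=
  fun k b =>
    b.elim
      (fun il => ∏ j, if j = il.1 then (if k il.1 = il.2 then (1 : ℝ) else 0) else c h j (k j))
      (fun g => ∏ j, c g j (k j))

/-- Polynomial version of `Amat`, with one variable for each coordinate of the configuration. -/
def Apoly (h : Fin (p (Fin.last n))) :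
    Matrix (∀ i : Fin n, Fin (p i.castSucc))
      ((Σ i : Fin n, Fin (p i.castSucc)) ⊕ Fin (p (Fin.last n)))
      (MvPolynomial (Fin (p (Fin.last n)) × Σ i : Fin n, Fin (p i.castSucc)) ℝ) :=
  fun k b =>
    b.elim
      (fun il => ∏ j, if j = il.1 then MvPolynomial.C (if k il.1 = il.2 then (1 : ℝ) else 0)
        else MvPolynomial.X (h, ⟨j, k j⟩))
      (fun g => ∏ j, MvPolynomial.X (g, ⟨j, k j⟩))

lemma evalA (xv : (Fin (p (Fin.last n)) × Σ i : Fin n, Fin (p i.castSucc)) → ℝ)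
    (h : Fin (p (Fin.last n))) :
    (Apoly p h).map (MvPolynomial.eval xv) = Amat p (fun g i l => xv (g, ⟨i, l⟩)) h := by
  ext k b
  cases b with
  | inl il =>
      simp only [Apoly, Amat, Matrix.map_apply, Sum.elim_inl, map_prod,
        apply_ite (MvPolynomial.eval xv), MvPolynomial.eval_C, MvPolynomial.eval_X]
  | inr g =>
      simp only [Apoly, Amat, Matrix.map_apply, Sum.elim_inr, map_prod, MvPolynomial.eval_X]

set_option maxHeartbeats 2000000 in
/-- The existence of a configuration making the matrix `Amat p c h` surjective. -/
lemma witness (hn : 1 ≤ n) (hp : ∀ i : Fin n, 0 < p i.castSucc)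
    (hcount : (∏ i : Fin n, (p i.castSucc : ℤ)) - (∑ i : Fin n, (p i.castSucc : ℤ)) + n
      ≤ (p (Fin.last n) : ℤ))
    (h : Fin (p (Fin.last n))) :
    ∃ c, ∀ u : (∀ i : Fin n, Fin (p i.castSucc)) → ℝ,
      ∃ w, (Amat p c h).mulVec w = u := by
  classical
  set k0 : ∀ i : Fin n, Fin (p i.castSucc) := fun i => ⟨0, hp i⟩ with hk0
  set crossP : (∀ i : Fin n, Fin (p i.castSucc)) → Prop :=
    fun k => ∃ il : Σ i : Fin n, Fin (p i.castSucc), k = Function.update k0 il.1 il.2 with hcrossP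
  -- counting
  have hinj : ∃ f : ((Σ i : Fin n, {l : Fin (p i.castSucc) // l ≠ k0 i}) ⊕ Unit) →
      {k // crossP k}, Function.Injective f := by
    refine ⟨Sum.elim
      (fun il => ⟨Function.update k0 il.1 il.2.1, ⟨⟨il.1, il.2.1⟩, rfl⟩⟩)
      (fun _ => ⟨k0, ⟨⟨⟨0, hn⟩, k0 ⟨0, hn⟩⟩, (Function.update_eq_self _ _).symm⟩⟩), ?_⟩
    rintro (⟨i, l, hl⟩ | ⟨⟩) (⟨i', l', hl'⟩ | ⟨⟩) hf <;>
      simp only [Sum.elim_inl, Sum.elim_inr, Subtype.mk.injEq] at hf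
    · rcases eq_or_ne i i' with rfl | hii
      · have hll : l = l' := by
          have h1 := congrFun hf i
          simpa using h1
        subst hll; rfl
      · exfalso
        have h1 := congrFun hf i
        rw [Function.update_self, Function.update_of_ne hii] at h1
        exact hl h1
    · exfalso
      have h1 := congrFun hf i
      rw [Function.update_self] at h1
      exact hl h1
    · exfalso
      have h1 := congrFun hf i'
      rw [Function.update_self] at h1
      exact hl' h1.symm
    · rfl
  obtain ⟨f, hf⟩ := hinj
  have hcard1 : (∑ i : Fin n, (p i.castSucc - 1)) + 1 ≤ Fintype.card {k // crossP k} := by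
    have := Fintype.card_le_of_injective f hf
    rw [Fintype.card_sum, Fintype.card_sigma] at this
    simpa [Fintype.card_subtype_compl, Fintype.card_subtype_eq] using this
  have hcompl : Fintype.card {k // ¬ crossP k}
      = Fintype.card (∀ i : Fin n, Fin (p i.castSucc)) - Fintype.card {k // crossP k} :=
    Fintype.card_subtype_compl _
  have hle : Fintype.card {k // crossP k} ≤ Fintype.card (∀ i : Fin n, Fin (p i.castSucc)) :=
    Fintype.card_subtype_le _
  have hmiss : Fintype.card {k // ¬ crossP k} + 1 ≤ p (Fin.last n) := by
    have e0 : Fintype.card (∀ i : Fin n, Fin (p i.castSucc)) = ∏ i : Fin n, p i.castSucc := by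
      simp [Fintype.card_pi]
    have e1 : ((∑ i : Fin n, (p i.castSucc - 1) : ℕ) : ℤ)
        = (∑ i : Fin n, (p i.castSucc : ℤ)) - n := by
      rw [Nat.cast_sum]
      rw [Finset.sum_congr rfl (fun i _ => Nat.cast_sub (hp i))]
      rw [Finset.sum_sub_distrib]
      simp [mul_comm]
    have e2 : ((∏ i : Fin n, p i.castSucc : ℕ) : ℤ) = ∏ i : Fin n, (p i.castSucc : ℤ) := by
      push_cast; rfl
    have hZ : (Fintype.card {k // ¬ crossP k} : ℤ) + 1 ≤ (p (Fin.last n) : ℤ) := by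
      have hle' : Fintype.card {k // crossP k} ≤ ∏ i : Fin n, p i.castSucc := by
        rw [← e0]; exact hle
      have h4 : (Fintype.card {k // ¬ crossP k} : ℤ)
          = ((∏ i : Fin n, p i.castSucc : ℕ) : ℤ) - (Fintype.card {k // crossP k} : ℤ) := by
        rw [hcompl, e0, Nat.cast_sub hle']
      have h5 : ((∑ i : Fin n, (p i.castSucc : ℤ)) - n) + 1
          ≤ (Fintype.card {k // crossP k} : ℤ) := by
        rw [← e1]
        exact_mod_cast hcard1
      rw [h4, e2]
      linarith
    exact_mod_cast hZ
  -- the enumeration σ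
  have hcard2 : Fintype.card {k // ¬ crossP k} ≤ Fintype.card {g : Fin (p (Fin.last n)) // g ≠ h} := by
    have : Fintype.card {g : Fin (p (Fin.last n)) // g ≠ h}
        = p (Fin.last n) - 1 := by
      simp [Fintype.card_subtype_compl, Fintype.card_subtype_eq]
    omega
  obtain ⟨emb⟩ := Function.Embedding.nonempty_of_card_le hcard2
  set σ : Fin (p (Fin.last n)) → (∀ i : Fin n, Fin (p i.castSucc)) :=
    fun g => if hg : ∃ m : {k // ¬ crossP k}, (emb m : Fin (p (Fin.last n))) = g
      then (Classical.choose hg : {k // ¬ crossP k}).1 else k0 with hσ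
  have hσh : σ h = k0 := by
    rw [hσ]
    exact dif_neg (by rintro ⟨m, hm⟩; exact (emb m).2 hm)
  have hσcov : ∀ k, ¬ crossP k → ∃ g, σ g = k := by
    intro k hk
    refine ⟨(emb ⟨k, hk⟩ : Fin (p (Fin.last n))), ?_⟩
    have hex : ∃ m : {k // ¬ crossP k},
        (emb m : Fin (p (Fin.last n))) = (emb ⟨k, hk⟩ : Fin (p (Fin.last n))) := ⟨⟨k, hk⟩, rfl⟩
    rw [hσ]
    simp only []
    rw [dif_pos hex]
    have hspec := Classical.choose_spec hex
    have : Classical.choose hex = ⟨k, hk⟩ := emb.injective (Subtype.ext hspec)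
    rw [this]
  -- the configuration
  set c : Fin (p (Fin.last n)) → ∀ i : Fin n, Fin (p i.castSucc) → ℝ :=
    fun g i l => if l = σ g i then (1 : ℝ) else 0 with hc
  set τ : ((Σ i : Fin n, Fin (p i.castSucc)) ⊕ Fin (p (Fin.last n)))
      → (∀ i : Fin n, Fin (p i.castSucc)) :=
    Sum.elim (fun il => Function.update k0 il.1 il.2) σ with hτ
  have hA : ∀ k b, Amat p c h k b = if k = τ b then (1 : ℝ) else 0 := by
    intro k b
    cases b with
    | inl il =>
        have hfac : ∀ j, (if j = il.1 then (if k il.1 = il.2 then (1 : ℝ) else 0) else c h j (k j))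
            = if k j = Function.update k0 il.1 il.2 j then (1 : ℝ) else 0 := by
          intro j
          rcases eq_or_ne j il.1 with rfl | hj
          · simp
          · rw [if_neg hj, Function.update_of_ne hj, hc]
            simp [hσh]
        show (∏ j, if j = il.1 then (if k il.1 = il.2 then (1 : ℝ) else 0) else c h j (k j)) = _
        rw [Finset.prod_congr rfl (fun j _ => hfac j), Finset.prod_boole]
        simp [hτ, funext_iff]
    | inr g =>
        show (∏ j, c g j (k j)) = _
        have hfac : ∀ j, c g j (k j) = if k j = σ g j then (1 : ℝ) else 0 := fun j => rfl
        rw [Finset.prod_congr rfl (fun j _ => hfac j), Finset.prod_boole]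
        simp [hτ, funext_iff]
  have hτsurj : ∀ k, ∃ b, τ b = k := by
    intro k
    by_cases hk : crossP k
    · obtain ⟨il, hil⟩ := hk
      exact ⟨Sum.inl il, hil.symm⟩
    · obtain ⟨g, hg⟩ := hσcov k hk
      exact ⟨Sum.inr g, hg⟩
  choose s hs using hτsurj
  refine ⟨c, fun u => ⟨fun b => ∑ k', if b = s k' then u k' else 0, ?_⟩⟩
  funext k
  simp only [Matrix.mulVec, dotProduct, hA]
  rw [Finset.sum_congr rfl (fun b _ => Finset.mul_sum _ _ _)]
  rw [Finset.sum_comm]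
  have hinner : ∀ k', (∑ b, (if k = τ b then (1 : ℝ) else 0) * (if b = s k' then u k' else 0))
      = (if k = k' then (1 : ℝ) else 0) * u k' := by
    intro k'
    have : ∀ b, (if k = τ b then (1 : ℝ) else 0) * (if b = s k' then u k' else 0)
        = if b = s k' then (if k = τ b then (1 : ℝ) else 0) * u k' else 0 := by
      intro b
      by_cases hb : b = s k' <;> simp [hb]
    rw [Finset.sum_congr rfl (fun b _ => this b)]
    rw [Finset.sum_ite_eq' univ (s k') (fun b => (if k = τ b then (1 : ℝ) else 0) * u k')]
    simp [hs]
  rw [Finset.sum_congr rfl (fun k' _ => hinner k')]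
  simp [ite_mul, one_mul, zero_mul, Finset.sum_ite_eq]

lemma eval_det (xv : (Fin (p (Fin.last n)) × Σ i : Fin n, Fin (p i.castSucc)) → ℝ)
    (h : Fin (p (Fin.last n))) :
    MvPolynomial.eval xv ((Apoly p h * (Apoly p h)ᵀ).det)
      = ((Amat p (fun g i l => xv (g, ⟨i, l⟩)) h)
          * (Amat p (fun g i l => xv (g, ⟨i, l⟩)) h)ᵀ).det := by
  rw [RingHom.map_det, RingHom.mapMatrix_apply, Matrix.map_mul, Matrix.transpose_map, evalA]

/-- The rank-one multilinear map, as a continuous multilinear map. -/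
def Mmap : ContinuousMultilinearMap ℝ (fun i : Fin (n + 1) => Fin (p i) → ℝ)
    ((∀ i : Fin (n + 1), Fin (p i)) → ℝ) :=
  ContinuousMultilinearMap.pi (fun κ =>
    (ContinuousMultilinearMap.mkPiAlgebra ℝ (Fin (n + 1)) ℝ).compContinuousLinearMap
      (fun i => ContinuousLinearMap.proj (κ i)))

lemma Mmap_apply (v : ∀ i : Fin (n + 1), Fin (p i) → ℝ) (κ : ∀ i : Fin (n + 1), Fin (p i)) :
    Mmap p v κ = ∏ i, v i (κ i) := by
  simp [Mmap]

end TensorPf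

open Matrix Finset

/-- Under the perfectness bounds on `p_{n+1}`, there is a point at which the
Fréchet derivative of the parametrization map
`φ(a) = Σ_h a^{(h)}_1 ⊗ ⋯ ⊗ a^{(h)}_{n+1}` (with `p_{n+1}` summands) is surjective. -/
theorem exists_point_with_surjective_fderiv
    {n : ℕ} (hn : 2 ≤ n) (p : Fin (n + 1) → ℕ)
    (hp2 : 2 ≤ p 0)
    (hmono : ∀ i j : Fin n, i ≤ j → p i.castSucc ≤ p j.castSucc)
    (hq : (∏ i : Fin n, (p i.castSucc : ℤ)) - (∑ i : Fin n, (p i.castSucc : ℤ)) + n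
        ≤ (p (Fin.last n) : ℤ))
    (hub : (p (Fin.last n) : ℤ) ≤ ∏ i : Fin n, (p i.castSucc : ℤ)) :
    ∃ z : Fin (p (Fin.last n)) → ∀ i : Fin (n + 1), Fin (p i) → ℝ,
      Function.Surjective
        ⇑(fderiv ℝ
          (fun a : Fin (p (Fin.last n)) → ∀ i : Fin (n + 1), Fin (p i) → ℝ =>
            ∑ h, rankOneTensor p (a h)) z) := by
  classical
  rcases Nat.eq_zero_or_pos (p (Fin.last n)) with hr0 | hrpos
  · refine ⟨fun _ _ _ => 0, fun T => ⟨0, ?_⟩⟩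
    funext κ
    exact absurd (κ (Fin.last n)).2 (by omega)
  have hn1 : 1 ≤ n := by omega
  have hp : ∀ i : Fin n, 0 < p i.castSucc := by
    intro i
    have h0 : (⟨0, by omega⟩ : Fin n) ≤ i := Fin.le_def.mpr (Nat.zero_le _)
    have hc0 : ((⟨0, by omega⟩ : Fin n) : Fin n).castSucc = (0 : Fin (n + 1)) := by
      ext; simp
    have := hmono ⟨0, by omega⟩ i h0
    rw [hc0] at this
    omega
  -- nonvanishing of the product of the Gram determinants
  have hFh : ∀ h : Fin (p (Fin.last n)),
      ((TensorPf.Apoly p h) * (TensorPf.Apoly p h)ᵀ).det ≠ 0 := by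
    intro h h0
    obtain ⟨c, hc⟩ := TensorPf.witness p hn1 hp hq h
    have hdet := (TensorPf.gram_det_ne_zero_iff (TensorPf.Amat p c h)).mpr hc
    apply hdet
    have heval := TensorPf.eval_det p (fun v => c v.1 v.2.1 v.2.2) h
    rw [h0] at heval
    simp only [map_zero] at heval
    exact heval.symm
  have hex : ∃ xv, ∀ h : Fin (p (Fin.last n)),
      MvPolynomial.eval xv (((TensorPf.Apoly p h) * (TensorPf.Apoly p h)ᵀ).det) ≠ 0 := by
    have hF0 : (∏ h : Fin (p (Fin.last n)),
        ((TensorPf.Apoly p h) * (TensorPf.Apoly p h)ᵀ).det) ≠ 0 :=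
      Finset.prod_ne_zero_iff.mpr (fun h _ => hFh h)
    by_contra hco
    push_neg at hco
    apply hF0
    apply MvPolynomial.funext
    intro x
    obtain ⟨h, hh⟩ := hco x
    rw [map_prod, map_zero]
    exact Finset.prod_eq_zero (Finset.mem_univ h) hh
  obtain ⟨xv, hxv⟩ := hex
  set c : Fin (p (Fin.last n)) → ∀ i : Fin n, Fin (p i.castSucc) → ℝ :=
    fun g i l => xv (g, ⟨i, l⟩) with hcdef
  have hS : ∀ h, ∀ u : (∀ i : Fin n, Fin (p i.castSucc)) → ℝ,
      ∃ w, (TensorPf.Amat p c h).mulVec w = u := by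
    intro h
    apply (TensorPf.gram_det_ne_zero_iff _).mp
    have heval := TensorPf.eval_det p xv h
    rw [← heval]
    exact hxv h
  set eb : Fin (p (Fin.last n)) → Fin (p (Fin.last n)) → ℝ :=
    fun h t => if t = h then 1 else 0 with heb
  set z : Fin (p (Fin.last n)) → ∀ i : Fin (n + 1), Fin (p i) → ℝ :=
    fun g => Fin.snoc (c g) (eb g) with hz
  refine ⟨z, ?_⟩
  set L : (Fin (p (Fin.last n)) → ∀ i : Fin (n + 1), Fin (p i) → ℝ) →L[ℝ]
      ((∀ i : Fin (n + 1), Fin (p i)) → ℝ) :=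
    ∑ h, ((TensorPf.Mmap p).linearDeriv (z h)).comp (ContinuousLinearMap.proj h) with hL
  have hφ : HasFDerivAt (fun a : Fin (p (Fin.last n)) → ∀ i : Fin (n + 1), Fin (p i) → ℝ =>
      ∑ h, rankOneTensor p (a h)) L z := by
    rw [hL]
    apply HasFDerivAt.fun_sum
    intro h _
    have h2 := ((TensorPf.Mmap p).hasFDerivAt (x := z h)).comp z
      (ContinuousLinearMap.proj h :
        (Fin (p (Fin.last n)) → ∀ i : Fin (n + 1), Fin (p i) → ℝ) →L[ℝ]
          (∀ i : Fin (n + 1), Fin (p i) → ℝ)).hasFDerivAt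
    refine h2.congr_of_eventuallyEq (Filter.Eventually.of_forall fun a => ?_)
    funext κ
    simp [rankOneTensor, TensorPf.Mmap_apply]
  rw [hφ.fderiv]
  intro T
  have hsol : ∀ h, ∃ w, (TensorPf.Amat p c h).mulVec w
      = fun k : ∀ i : Fin n, Fin (p i.castSucc) => T (Fin.snoc k h) := fun h => hS h _
  choose sol hsol using hsol
  set v : Fin (p (Fin.last n)) → ∀ i : Fin (n + 1), Fin (p i) → ℝ :=
    fun g => Fin.snoc (fun i l => sol g (Sum.inl ⟨i, l⟩)) (fun t => sol t (Sum.inr g)) with hv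
  refine ⟨v, ?_⟩
  funext κ
  simp only [hL, ContinuousLinearMap.sum_apply, ContinuousLinearMap.comp_apply,
    ContinuousLinearMap.proj_apply, ContinuousMultilinearMap.linearDeriv_apply,
    Finset.sum_apply]
  have key : ∀ h : Fin (p (Fin.last n)),
      (∑ i : Fin (n + 1), TensorPf.Mmap p (Function.update (z h) i (v h i)) κ)
        = (∑ i₀ : Fin n, ∏ j₀ : Fin n,
            (Function.update (c h) i₀ (fun l => sol h (Sum.inl ⟨i₀, l⟩))) j₀ (Fin.init κ j₀))
            * eb h (κ (Fin.last n))
          + (∏ j₀ : Fin n, c h j₀ (Fin.init κ j₀)) * sol (κ (Fin.last n)) (Sum.inr h) := by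
    intro h
    rw [Fin.sum_univ_castSucc]
    congr 1
    · rw [Finset.sum_mul]
      refine Finset.sum_congr rfl fun i₀ _ => ?_
      rw [TensorPf.Mmap_apply]
      have hu : Function.update (z h) i₀.castSucc (v h i₀.castSucc)
          = Fin.snoc (Function.update (c h) i₀ (fun l => sol h (Sum.inl ⟨i₀, l⟩))) (eb h) := by
        have hvc : v h i₀.castSucc = fun l => sol h (Sum.inl ⟨i₀, l⟩) := by
          rw [hv]
          exact Fin.snoc_castSucc _ _ _
        rw [hz, hvc, ← Fin.snoc_update]
      rw [hu, Fin.prod_univ_castSucc]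
      simp [Fin.snoc_castSucc, Fin.snoc_last, Fin.init]
    · rw [TensorPf.Mmap_apply]
      have hu : Function.update (z h) (Fin.last n) (v h (Fin.last n))
          = Fin.snoc (c h) (v h (Fin.last n)) := by
        rw [hz]
        exact Fin.update_snoc_last _ _ _
      have hvl : v h (Fin.last n) = fun t => sol t (Sum.inr h) := by
        rw [hv]
        exact Fin.snoc_last _ _
      rw [hu, Fin.prod_univ_castSucc]
      simp [Fin.snoc_castSucc, Fin.snoc_last, Fin.init, hvl]
  rw [Finset.sum_congr rfl (fun h _ => key h), Finset.sum_add_distrib]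
  have part1 : (∑ h, (∑ i₀ : Fin n, ∏ j₀ : Fin n,
        (Function.update (c h) i₀ (fun l => sol h (Sum.inl ⟨i₀, l⟩))) j₀ (Fin.init κ j₀))
        * eb h (κ (Fin.last n)))
      = ∑ i₀ : Fin n, ∏ j₀ : Fin n,
          (Function.update (c (κ (Fin.last n))) i₀
            (fun l => sol (κ (Fin.last n)) (Sum.inl ⟨i₀, l⟩))) j₀ (Fin.init κ j₀) := by
    simp only [heb, mul_ite, mul_one, mul_zero]
    rw [Finset.sum_ite_eq]
    simp
  rw [part1]
  have hfin := congrFun (hsol (κ (Fin.last n))) (Fin.init κ)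
  rw [Fin.snoc_init_self] at hfin
  rw [← hfin]
  simp only [Matrix.mulVec, dotProduct]
  rw [Fintype.sum_sum_type]
  congr 1
  · rw [← Finset.univ_sigma_univ, Finset.sum_sigma]
    refine Finset.sum_congr rfl fun i₀ _ => ?_
    rw [TensorPf.prod_update_eval]
    rfl

end
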